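/- Let G be a finite simple graph on n ≥ 1 vertices and let G' be the graph obtained from G by adding one new vertex u adjacent to every vertex of G. Assign weight n to u and weight 1 to every other vertex. Then the maximum, over all vertex sets C ⊆ V(G') such that G'[C] is connected and triangle-free (contains no K_3 as a subgraph), of the total weight of C equals n + α(G), where α(G) is the maximum size of an independent set of G. -/

import Mathlib

open SimpleGraph

/-- The graph obtained from `G` by adding a new vertex (`none`) adjacent exactly
to the vertices of `T`. -/
def addVertex {V : Type} (G : SimpleGraph V) (T : Set V) : SimpleGraph (Option V) where
  Adj a b :=
    match a, b with
    | some u, some v => G.Adj u v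
    | some u, none => u ∈ T
    | none, some v => v ∈ T
    | none, none => False
  symm := by
    refine ⟨?_⟩
    rintro (_ | u) (_ | v) h
    · exact h
    · exact h
    · exact h
    · exact G.adj_symm h
  loopless := by
    refine ⟨?_⟩
    rintro (_ | u) h
    · exact h
    · exact G.loopless.irrefl u h

/-- Total weight of a set of vertices of `Option V`: the new vertex `none` has
weight `|V|`, every original vertex has weight `1`. -/
noncomputable def totalWeight {V : Type} [Fintype V] (C : Set (Option V)) : ℕ :=
  ∑ v ∈ C.toFinite.toFinset, v.elim (Fintype.card V) (fun _ => 1)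

/-- The independence number `α(G)`. -/
noncomputable def indepNum {V : Type} [Fintype V] (G : SimpleGraph V) : ℕ :=
  sSup {k : ℕ | ∃ A : Set V, (∀ a ∈ A, ∀ b ∈ A, ¬ G.Adj a b) ∧ A.ncard = k}
lemma tw_split {V : Type} [Fintype V] (C : Set (Option V)) (hd : Decidable (none ∈ C)) :
    totalWeight C = (if none ∈ C then Fintype.card V else 0) + (some ⁻¹' C).ncard := by
  classical
  unfold totalWeight
  rw [← Finset.sum_filter_add_sum_filter_not C.toFinite.toFinset (· = none)]
  congr 1
  · rw [Finset.sum_filter, Finset.sum_ite_eq' C.toFinite.toFinset none]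
    simp only [Set.Finite.mem_toFinset, Option.elim]
  · have h1 : ∀ v ∈ C.toFinite.toFinset.filter (fun v => ¬ v = none),
        (Option.elim v (Fintype.card V) (fun _ => 1) : ℕ) = 1 := by
      rintro (_ | x) hv
      · simp at hv
      · rfl
    rw [Finset.sum_congr rfl h1, Finset.sum_const, smul_eq_mul, mul_one]
    have h2 : C.toFinite.toFinset.filter (fun v => ¬ v = none)
        = (some ⁻¹' C).toFinite.toFinset.image some := by
      ext (_ | x)
      · simp
      · simp only [Finset.mem_filter, Set.Finite.mem_toFinset, Finset.mem_image,
          Option.some.injEq]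
        constructor
        · rintro ⟨h, -⟩; exact ⟨x, h, rfl⟩
        · rintro ⟨y, hy, rfl⟩; exact ⟨hy, by simp⟩
    rw [h2, Finset.card_image_of_injective _ (Option.some_injective V),
      Set.ncard_eq_toFinset_card']
    congr 1
    ext x
    simp only [Set.Finite.mem_toFinset, Set.mem_toFinset]

lemma tw_mem {V : Type} [Fintype V] {C : Set (Option V)} (h : none ∈ C) :
    totalWeight C = Fintype.card V + (some ⁻¹' C).ncard := by
  classical
  rw [tw_split C (Classical.dec _), if_pos h]

lemma tw_not {V : Type} [Fintype V] {C : Set (Option V)} (h : none ∉ C) :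
    totalWeight C = (some ⁻¹' C).ncard := by
  classical
  rw [tw_split C (Classical.dec _), if_neg h, zero_add]

lemma indep_sSup {V : Type} [Fintype V] (G : SimpleGraph V) :
    (∃ A : Set V, (∀ a ∈ A, ∀ b ∈ A, ¬ G.Adj a b) ∧ A.ncard = _root_.indepNum G) ∧
    (∀ A : Set V, (∀ a ∈ A, ∀ b ∈ A, ¬ G.Adj a b) → A.ncard ≤ _root_.indepNum G) := by
  classical
  set S := {k : ℕ | ∃ A : Set V, (∀ a ∈ A, ∀ b ∈ A, ¬ G.Adj a b) ∧ A.ncard = k}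
  have hne : S.Nonempty := ⟨0, ∅, by simp, by simp⟩
  have hbdd : BddAbove S := by
    refine ⟨Fintype.card V, ?_⟩
    rintro k ⟨A, _, rfl⟩
    calc A.ncard ≤ (Set.univ : Set V).ncard := Set.ncard_le_ncard (Set.subset_univ A)
      _ = Fintype.card V := by rw [Set.ncard_univ, Nat.card_eq_fintype_card]
  constructor
  · exact Nat.sSup_mem hne hbdd
  · intro A hA
    exact le_csSup hbdd ⟨A, hA, rfl⟩

theorem stmt15 {V : Type} [Fintype V] (hn : 1 ≤ Fintype.card V) (G : SimpleGraph V) :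
    IsGreatest {w : ℕ | ∃ C : Set (Option V),
        ((addVertex G Set.univ).induce C).Connected ∧
        (∀ a ∈ C, ∀ b ∈ C, ∀ c ∈ C,
          ¬ ((addVertex G Set.univ).Adj a b ∧ (addVertex G Set.univ).Adj a c ∧
             (addVertex G Set.univ).Adj b c)) ∧
        w = totalWeight C}
      (Fintype.card V + _root_.indepNum G) := by
  classical
  obtain ⟨⟨A, hA, hAcard⟩, hle⟩ := indep_sSup G
  constructor
  · -- membership
    refine ⟨insert none (some '' A), ?_, ?_, ?_⟩
    · -- connected
      have hmem : (none : Option V) ∈ insert none (some '' A) := Set.mem_insert _ _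
      have key : ∀ v : (insert none (some '' A) : Set (Option V)),
          ((addVertex G Set.univ).induce _).Reachable v ⟨none, hmem⟩ := by
        rintro ⟨(_ | x), hv⟩
        · exact Reachable.refl _
        · refine Adj.reachable ?_
          show (addVertex G Set.univ).Adj (some x) none
          exact Set.mem_univ x
      haveI : Nonempty (insert none (some '' A) : Set (Option V)) := ⟨⟨none, hmem⟩⟩
      exact ⟨fun v w => (key v).trans (key w).symm⟩
    · -- triangle-free
      rintro a ha b hb c hc ⟨hab, hac, hbc⟩
      have hm : ∀ x : V, some x ∈ insert none (some '' A) → x ∈ A := by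
        intro x hx
        rcases hx with h | ⟨y, hy, he⟩
        · simp at h
        · cases Option.some_injective V he; exact hy
      rcases a with _ | x <;> rcases b with _ | y <;> rcases c with _ | z
      · exact hab
      · exact hab
      · exact hac
      · exact hA y (hm y hb) z (hm z hc) hbc
      · exact hbc
      · exact hA x (hm x ha) z (hm z hc) hac
      · exact hA x (hm x ha) y (hm y hb) hab
      · exact hA x (hm x ha) y (hm y hb) hab
    · -- weight
      rw [tw_mem (Set.mem_insert _ _)]
      have hpre : some ⁻¹' (insert none (some '' A)) = A := by
        ext x
        simp [Set.mem_preimage, Option.some_injective V |>.mem_set_image]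
      rw [hpre, hAcard]
  · -- upper bound
    rintro w ⟨C, hconn, htri, rfl⟩
    by_cases hnone : none ∈ C
    · rw [tw_mem hnone]
      have hind : ∀ a ∈ some ⁻¹' C, ∀ b ∈ some ⁻¹' C, ¬ G.Adj a b := by
        intro a ha b hb hadj
        exact htri none hnone (some a) ha (some b) hb
          ⟨Set.mem_univ a, Set.mem_univ b, hadj⟩
      exact Nat.add_le_add_left (hle _ hind) _
    · rw [tw_not hnone]
      calc (some ⁻¹' C).ncard ≤ (Set.univ : Set V).ncard :=
            Set.ncard_le_ncard (Set.subset_univ _)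
        _ = Fintype.card V := by rw [Set.ncard_univ, Nat.card_eq_fintype_card]
        _ ≤ Fintype.card V + _root_.indepNum G := Nat.le_add_right _ _
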